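/- Let H : ℝ → ℝ be the Heaviside function with H(y) = 1 for y > 0 and H(y) = 0 for y ≤ 0, and let ω₁ ∈ ℝ. Define F₁(τ) = −cos τ·(1 − H(τ − π/2) + H(τ − 3π/2)) + 2ω₁·cos τ. Then ∫_0^{2π} F₁(τ)·cos τ dτ = 2π·ω₁ − π/2; in particular this integral vanishes if and only if ω₁ = 1/4. -/
import Mathlib


open Real MeasureTheory

/-- Heaviside function: `H y = 1` for `y > 0`, `H y = 0` for `y ≤ 0`. -/
noncomputable def H (y : ℝ) : ℝ := if 0 < y then 1 else 0

/-- Forcing of the first-order Lindstedt–Poincaré equation restricted to one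
period `[0, 2π]`. -/
noncomputable def F₁ (ω₁ τ : ℝ) : ℝ :=
  -Real.cos τ * (1 - H (τ - π / 2) + H (τ - 3 * π / 2)) + 2 * ω₁ * Real.cos τ

lemma H_of_pos {y : ℝ} (h : 0 < y) : H y = 1 := if_pos h
lemma H_of_nonpos {y : ℝ} (h : y ≤ 0) : H y = 0 := if_neg (not_lt.mpr h)

lemma H_abs_le (y : ℝ) : |H y| ≤ 1 := by
  unfold H; split <;> simp

lemma f_integrable (ω₁ a b : ℝ) :
    IntervalIntegrable (fun τ => F₁ ω₁ τ * Real.cos τ) volume a b := by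
  rw [intervalIntegrable_iff]
  apply Measure.integrableOn_of_bounded (M := (2 + 2 * |ω₁|)) measure_Ioc_lt_top.ne
  · apply Measurable.aestronglyMeasurable
    have hH : Measurable H := Measurable.ite measurableSet_Ioi measurable_const measurable_const
    unfold F₁
    apply Measurable.mul _ Real.measurable_cos
    apply Measurable.add _ (measurable_const.mul Real.measurable_cos)
    apply Measurable.mul Real.measurable_cos.neg
    exact (measurable_const.sub (hH.comp (measurable_id.sub measurable_const))).add
      (hH.comp (measurable_id.sub measurable_const))
  · filter_upwards with x
    have h1 : |H (x - π / 2)| ≤ 1 := H_abs_le _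
    have h2 : |H (x - 3 * π / 2)| ≤ 1 := H_abs_le _
    have hc : |Real.cos x| ≤ 1 := Real.abs_cos_le_one x
    simp only [F₁, Real.norm_eq_abs]
    calc |(-Real.cos x * (1 - H (x - π / 2) + H (x - 3 * π / 2)) + 2 * ω₁ * Real.cos x) * Real.cos x|
        ≤ |(-Real.cos x * (1 - H (x - π / 2) + H (x - 3 * π / 2)) + 2 * ω₁ * Real.cos x)| * 1 := by
          rw [abs_mul]; gcongr
      _ ≤ (|Real.cos x| * |1 - H (x - π / 2) + H (x - 3 * π / 2)| + 2 * |ω₁| * |Real.cos x|) * 1 := by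
          gcongr
          calc |(-Real.cos x * (1 - H (x - π / 2) + H (x - 3 * π / 2)) + 2 * ω₁ * Real.cos x)|
              ≤ |(-Real.cos x * (1 - H (x - π / 2) + H (x - 3 * π / 2)))| + |2 * ω₁ * Real.cos x| :=
                abs_add_le _ _
            _ ≤ |Real.cos x| * |1 - H (x - π / 2) + H (x - 3 * π / 2)| + 2 * |ω₁| * |Real.cos x| := by
                rw [abs_mul, abs_neg, abs_mul, abs_mul, abs_two]
      _ ≤ (1 * 2 + 2 * |ω₁| * 1) * 1 := by
          gcongr
          calc |1 - H (x - π / 2) + H (x - 3 * π / 2)|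
              ≤ |1 - H (x - π / 2)| + |H (x - 3 * π / 2)| := abs_add_le _ _
            _ ≤ 1 + 1 := by
                have hA : |1 - H (x - π / 2)| ≤ 1 := by unfold H; split <;> simp
                exact add_le_add hA (H_abs_le _)
            _ = 2 := by norm_num
      _ = 2 + 2 * |ω₁| := by ring

theorem stmt_3 (ω₁ : ℝ) :
    (∫ τ in (0 : ℝ)..(2 * π), F₁ ω₁ τ * Real.cos τ) = 2 * π * ω₁ - π / 2 ∧
    ((∫ τ in (0 : ℝ)..(2 * π), F₁ ω₁ τ * Real.cos τ) = 0 ↔ ω₁ = 1 / 4) := by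
  have hπ := Real.pi_pos
  have key : (∫ τ in (0 : ℝ)..(2 * π), F₁ ω₁ τ * Real.cos τ) = 2 * π * ω₁ - π / 2 := by
    have split1 : (∫ τ in (0 : ℝ)..(2 * π), F₁ ω₁ τ * Real.cos τ)
        = (∫ τ in (0 : ℝ)..(π / 2), F₁ ω₁ τ * Real.cos τ)
          + (∫ τ in (π / 2)..(3 * π / 2), F₁ ω₁ τ * Real.cos τ)
          + (∫ τ in (3 * π / 2)..(2 * π), F₁ ω₁ τ * Real.cos τ) := by
      rw [intervalIntegral.integral_add_adjacent_intervals (f_integrable ω₁ _ _) (f_integrable ω₁ _ _),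
        intervalIntegral.integral_add_adjacent_intervals (f_integrable ω₁ _ _) (f_integrable ω₁ _ _)]
    have I1 : (∫ τ in (0 : ℝ)..(π / 2), F₁ ω₁ τ * Real.cos τ)
        = (2 * ω₁ - 1) * (π / 4) := by
      have : (∫ τ in (0 : ℝ)..(π / 2), F₁ ω₁ τ * Real.cos τ)
          = ∫ τ in (0 : ℝ)..(π / 2), (2 * ω₁ - 1) * Real.cos τ ^ 2 := by
        apply intervalIntegral.integral_congr
        intro x hx
        rw [Set.uIcc_of_le (by positivity)] at hx
        have h1 : H (x - π / 2) = 0 := H_of_nonpos (by linarith [hx.2])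
        have h2 : H (x - 3 * π / 2) = 0 := H_of_nonpos (by nlinarith [hx.2, hπ])
        simp only [F₁, h1, h2]; ring
      rw [this, intervalIntegral.integral_const_mul, integral_cos_sq,
        Real.cos_pi_div_two, Real.sin_zero, Real.cos_zero]
      ring
    have I2 : (∫ τ in (π / 2)..(3 * π / 2), F₁ ω₁ τ * Real.cos τ) = ω₁ * π := by
      have : (∫ τ in (π / 2)..(3 * π / 2), F₁ ω₁ τ * Real.cos τ)
          = ∫ τ in (π / 2)..(3 * π / 2), 2 * ω₁ * Real.cos τ ^ 2 := by
        apply intervalIntegral.integral_congr_ae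
        filter_upwards with x hx
        rw [Set.uIoc_of_le (by linarith)] at hx
        have h1 : H (x - π / 2) = 1 := H_of_pos (by linarith [hx.1])
        have h2 : H (x - 3 * π / 2) = 0 := H_of_nonpos (by linarith [hx.2])
        simp only [F₁, h1, h2]; ring
      rw [this, intervalIntegral.integral_const_mul, integral_cos_sq]
      have h32 : Real.cos (3 * π / 2) = 0 := by
        have h : (3 : ℝ) * π / 2 = π + π / 2 := by ring
        rw [h, Real.cos_add]; simp
      rw [h32, Real.cos_pi_div_two]
      ring
    have I3 : (∫ τ in (3 * π / 2)..(2 * π), F₁ ω₁ τ * Real.cos τ)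
        = (2 * ω₁ - 1) * (π / 4) := by
      have : (∫ τ in (3 * π / 2)..(2 * π), F₁ ω₁ τ * Real.cos τ)
          = ∫ τ in (3 * π / 2)..(2 * π), (2 * ω₁ - 1) * Real.cos τ ^ 2 := by
        apply intervalIntegral.integral_congr_ae
        filter_upwards with x hx
        rw [Set.uIoc_of_le (by linarith)] at hx
        have h1 : H (x - π / 2) = 1 := H_of_pos (by linarith [hx.1])
        have h2 : H (x - 3 * π / 2) = 1 := H_of_pos (by linarith [hx.1])
        simp only [F₁, h1, h2]; ring
      rw [this, intervalIntegral.integral_const_mul, integral_cos_sq]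
      have h32 : Real.cos (3 * π / 2) = 0 := by
        have h : (3 : ℝ) * π / 2 = π + π / 2 := by ring
        rw [h, Real.cos_add]; simp
      rw [h32, Real.sin_two_pi]
      ring
    rw [split1, I1, I2, I3]; ring
  refine ⟨key, ?_⟩
  rw [key]
  constructor
  · intro h
    have : 2 * π * (ω₁ - 1 / 4) = 0 := by linarith
    rcases mul_eq_zero.mp this with h' | h'
    · exfalso; nlinarith
    · linarith
  · intro h; rw [h]; ring
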